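/- Let S be an antichain in F_{2k}^{[1,n]} and let i ≥ 1. Then the pure complex B(S, i) generated by {G ∈ F(S) : min(G) ≥ i} decomposes as the union over j ≥ i of the joins B(S([j,j+1]), j+2) * {j, j+1}-simplex, where the j-th component consists precisely of the facets of B(S,i) with minimum element j. -/

import Mathlib

/-- `F ≤_p G`: componentwise comparison of the increasing enumerations. -/
def lep (F G : Finset ℕ) : Prop :=
  F.card = G.card ∧ ∀ ℓ, (F.sort (· ≤ ·)).getD ℓ 0 ≤ (G.sort (· ≤ ·)).getD ℓ 0

/-- `F ≺_p G`: `F ≤_p G - 1` componentwise on increasing enumerations. -/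
def prep (F G : Finset ℕ) : Prop :=
  F.card = G.card ∧ ∀ ℓ < F.card,
    (F.sort (· ≤ ·)).getD ℓ 0 + 1 ≤ (G.sort (· ≤ ·)).getD ℓ 0

/-- The poset `F_{2k}^{[1,n]}`: `2k`-subsets of `[n]` that are disjoint unions
of `k` adjacent pairs `{y_j, y_j + 1}` with gaps `≥ 2`. -/
def FF (k n : ℕ) : Set (Finset ℕ) :=
  {F | ∃ y : ℕ → ℕ, (1 ≤ y 1) ∧ (∀ j, 1 ≤ j → j ≤ k → y j + 1 ≤ n) ∧
    (∀ j, 1 ≤ j → j < k → y j + 2 ≤ y (j + 1)) ∧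
    F = (Finset.Icc 1 k).biUnion (fun j => {y j, y j + 1})}

/-- The order ideal of `F_{2k}^{[1,n]}` generated by `S`. -/
def idealOf (k n : ℕ) (S : Set (Finset ℕ)) : Set (Finset ℕ) :=
  {G | G ∈ FF k n ∧ ∃ F ∈ S, lep G F}

/-- `S` is an antichain in `F_{2k}^{[1,n]}`. -/
def IsAC (k n : ℕ) (S : Set (Finset ℕ)) : Prop :=
  S ⊆ FF k n ∧ ∀ F ∈ S, ∀ G ∈ S, lep F G → F = G

/-- The candidates defining `S(J)` for the interval `J = [j, j+2l-1]`:
sets `H ⊆ [j+2l, n]` with `J ∪ H ∈ F(S)`. -/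
def SJcand (k n : ℕ) (S : Set (Finset ℕ)) (j l : ℕ) : Set (Finset ℕ) :=
  {H | (∀ a ∈ H, j + 2 * l ≤ a ∧ a ≤ n) ∧
    (Finset.Icc j (j + 2 * l - 1) ∪ H) ∈ idealOf k n S}

/-- `S(J)`, `J = [j, j+2l-1]`: the maximal elements of `SJcand`. -/
def SJ (k n : ℕ) (S : Set (Finset ℕ)) (j l : ℕ) : Set (Finset ℕ) :=
  {H | H ∈ SJcand k n S j l ∧ ∀ H' ∈ SJcand k n S j l, lep H H' → H = H'}

/-- `T ≤_p S` for antichains: every element of `T` is `≤_p` some element of `S`. -/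
def ACle (T S : Set (Finset ℕ)) : Prop := ∀ G ∈ T, ∃ F ∈ S, lep G F

/-- `T ≺_p S` for antichains: every element of `T` is `≺_p` some element of `S`. -/
def ACprec (T S : Set (Finset ℕ)) : Prop := ∀ G ∈ T, ∃ F ∈ S, prep G F

/-- `S - 1`: subtract the all-ones vector from each element of `S` with
minimum `> 1`. -/
def sub1 (S : Set (Finset ℕ)) : Set (Finset ℕ) :=
  {G | ∃ F ∈ S, (∀ a ∈ F, 2 ≤ a) ∧ G = F.image (fun a => a - 1)}

/-- The facets of `B(S, i)`: elements of the order ideal `F(S)` whose minimum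
is at least `i`. -/
def Bfacets (k n : ℕ) (S : Set (Finset ℕ)) (i : ℕ) : Set (Finset ℕ) :=
  {G | G ∈ idealOf k n S ∧ ∀ a ∈ G, i ≤ a}


section Aux

lemma lep_refl (F : Finset ℕ) : lep F F := ⟨rfl, fun _ => le_rfl⟩

lemma lep_trans {F G H : Finset ℕ} (h1 : lep F G) (h2 : lep G H) : lep F H :=
  ⟨h1.1.trans h2.1, fun ℓ => (h1.2 ℓ).trans (h2.2 ℓ)⟩

lemma list_sum_le : ∀ (l₁ l₂ : List ℕ), l₁.length = l₂.length →
    (∀ ℓ, l₁.getD ℓ 0 ≤ l₂.getD ℓ 0) → l₁.sum ≤ l₂.sum := by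
  intro l₁
  induction l₁ with
  | nil => intro l₂ h _; simp [List.length_eq_zero_iff.mp h.symm]
  | cons a t ih =>
    intro l₂ h h2
    cases l₂ with
    | nil => simp at h
    | cons b t₂ =>
      simp only [List.sum_cons]
      have h0 := h2 0
      simp only [List.getD_cons_zero] at h0
      have := ih t₂ (by simpa using h) (fun ℓ => by simpa using h2 (ℓ + 1))
      omega

lemma list_eq_of_le_sum : ∀ (l₁ l₂ : List ℕ), l₁.length = l₂.length →
    (∀ ℓ, l₁.getD ℓ 0 ≤ l₂.getD ℓ 0) → l₂.sum ≤ l₁.sum → l₁ = l₂ := by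
  intro l₁
  induction l₁ with
  | nil => intro l₂ h _ _; exact (List.length_eq_zero_iff.mp h.symm).symm
  | cons a t ih =>
    intro l₂ h h2 hsum
    cases l₂ with
    | nil => simp at h
    | cons b t₂ =>
      have h0 := h2 0
      simp only [List.getD_cons_zero] at h0
      have htail : ∀ ℓ, t.getD ℓ 0 ≤ t₂.getD ℓ 0 := fun ℓ => by simpa using h2 (ℓ + 1)
      have hlen : t.length = t₂.length := by simpa using h
      have hts := list_sum_le t t₂ hlen htail
      simp only [List.sum_cons] at hsum
      have hab : a = b := by omega
      have := ih t₂ hlen htail (by omega)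
      rw [hab, this]

lemma lep_antisymm' {F G : Finset ℕ} (h : lep F G)
    (hs : (G.sort (· ≤ ·)).sum ≤ (F.sort (· ≤ ·)).sum) : F = G := by
  have hlen : (F.sort (· ≤ ·)).length = (G.sort (· ≤ ·)).length := by
    rw [Finset.length_sort, Finset.length_sort, h.1]
  have heq := list_eq_of_le_sum _ _ hlen h.2 hs
  have := congrArg List.toFinset heq
  rwa [Finset.sort_toFinset, Finset.sort_toFinset] at this

lemma y_mono {k : ℕ} {y : ℕ → ℕ} (hgap : ∀ j, 1 ≤ j → j < k → y j + 2 ≤ y (j + 1))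
    {a : ℕ} (ha : 1 ≤ a) : ∀ b, a ≤ b → b ≤ k → y a ≤ y b := by
  intro b
  induction b with
  | zero => intro h1 _; exact absurd h1 (by omega)
  | succ m ih =>
    intro hab hbk
    rcases Nat.lt_or_ge a (m + 1) with hlt | hge
    · have h1 := ih (by omega) (by omega)
      have h2 := hgap m (by omega) (by omega)
      omega
    · have : a = m + 1 := by omega
      rw [this]

lemma FF_bounds {k n : ℕ} {F : Finset ℕ} (hF : F ∈ FF k n) : ∀ a ∈ F, 1 ≤ a ∧ a ≤ n := by
  obtain ⟨y, hy1, hyn, hgap, rfl⟩ := hF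
  intro a ha
  simp only [Finset.mem_biUnion, Finset.mem_Icc, Finset.mem_insert, Finset.mem_singleton] at ha
  obtain ⟨m, ⟨hm1, hmk⟩, hma⟩ := ha
  have h1 := y_mono hgap (le_refl 1) m hm1 hmk
  have h2 := hyn m hm1 hmk
  omega

lemma FF_zero {n : ℕ} : (∅ : Finset ℕ) ∈ FF 0 n := by
  refine ⟨fun _ => 1, le_refl 1, by omega, by omega, by simp⟩

lemma FF_nonempty {k n : ℕ} {F : Finset ℕ} (hk : 1 ≤ k) (hF : F ∈ FF k n) : F.Nonempty := by
  obtain ⟨y, hy1, hyn, hgap, rfl⟩ := hF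
  refine ⟨y 1, ?_⟩
  simp only [Finset.mem_biUnion, Finset.mem_Icc, Finset.mem_insert, Finset.mem_singleton]
  exact ⟨1, ⟨le_refl 1, hk⟩, Or.inl rfl⟩

lemma FF_decomp {k n j : ℕ} {G : Finset ℕ} (hk : 1 ≤ k) (hG : G ∈ FF k n)
    (hj : j ∈ G) (hmin : ∀ a ∈ G, j ≤ a) :
    j + 1 ∈ G ∧ j + 1 ≤ n ∧ (∀ a ∈ G \ {j, j + 1}, j + 2 ≤ a ∧ a ≤ n) ∧
      G \ {j, j + 1} ∈ FF (k - 1) n ∧ G = {j, j + 1} ∪ (G \ {j, j + 1}) := by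
  obtain ⟨y, hy1, hyn, hgap, hGeq⟩ := hG
  have hmem : ∀ a, a ∈ G ↔ ∃ m, (1 ≤ m ∧ m ≤ k) ∧ (a = y m ∨ a = y m + 1) := by
    intro a
    simp only [hGeq, Finset.mem_biUnion, Finset.mem_Icc, Finset.mem_insert, Finset.mem_singleton]
  have hy1G : y 1 ∈ G := (hmem _).mpr ⟨1, ⟨le_refl 1, hk⟩, Or.inl rfl⟩
  have hjy1 : j = y 1 := by
    obtain ⟨m, ⟨hm1, hmk⟩, hma⟩ := (hmem j).mp hj
    have := y_mono hgap (le_refl 1) m hm1 hmk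
    have := hmin _ hy1G
    omega
  have hj1G : j + 1 ∈ G := (hmem _).mpr ⟨1, ⟨le_refl 1, hk⟩, Or.inr (by omega)⟩
  have hj1n : j + 1 ≤ n := by have := hyn 1 (le_refl 1) hk; omega
  have hrest : ∀ a ∈ G \ {j, j + 1}, j + 2 ≤ a ∧ a ≤ n := by
    intro a ha
    simp only [Finset.mem_sdiff, Finset.mem_insert, Finset.mem_singleton] at ha
    obtain ⟨haG, hane⟩ := ha
    obtain ⟨m, ⟨hm1, hmk⟩, hma⟩ := (hmem a).mp haG
    have hm2 : 2 ≤ m := by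
      by_contra h
      have hm : m = 1 := by omega
      subst hm
      rcases hma with rfl | rfl <;> omega
    have h2 := y_mono hgap (by omega : (1:ℕ) ≤ 2) m hm2 hmk
    have h3 : y 1 + 2 ≤ y 2 := hgap 1 (le_refl 1) (by omega)
    have h4 := hyn m hm1 hmk
    omega
  have hunion : G = {j, j + 1} ∪ (G \ {j, j + 1}) := by
    refine (Finset.union_sdiff_of_subset ?_).symm
    intro a ha
    simp only [Finset.mem_insert, Finset.mem_singleton] at ha
    rcases ha with rfl | rfl
    · exact hj
    · exact hj1G
  refine ⟨hj1G, hj1n, hrest, ?_, hunion⟩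
  rcases Nat.eq_or_lt_of_le hk with hk1 | hk2
  · -- k = 1
    have hk1 : k = 1 := hk1.symm
    subst hk1
    have : G = {j, j + 1} := by
      ext a
      simp only [Finset.mem_insert, Finset.mem_singleton]
      rw [hmem a]
      constructor
      · rintro ⟨m, ⟨hm1, hmk⟩, hma⟩
        have : m = 1 := by omega
        subst this; omega
      · intro h
        exact ⟨1, ⟨le_refl 1, le_refl 1⟩, by omega⟩
    rw [this]
    simpa using FF_zero
  · -- k ≥ 2
    refine ⟨fun m => y (m + 1), ?_, ?_, ?_, ?_⟩
    · show 1 ≤ y 2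
      have h3 : y 1 + 2 ≤ y 2 := hgap 1 (le_refl 1) (by omega)
      omega
    · intro m hm1 hmk
      exact hyn (m + 1) (by omega) (by omega)
    · intro m hm1 hmk
      exact hgap (m + 1) (by omega) (by omega)
    · ext a
      simp only [Finset.mem_sdiff, Finset.mem_insert, Finset.mem_singleton,
        Finset.mem_biUnion, Finset.mem_Icc]
      constructor
      · rintro ⟨haG, hane⟩
        obtain ⟨m, ⟨hm1, hmk⟩, hma⟩ := (hmem a).mp haG
        have hm2 : 2 ≤ m := by
          by_contra h
          have hm : m = 1 := by omega
          subst hm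
          rcases hma with rfl | rfl <;> omega
        refine ⟨m - 1, ⟨by omega, by omega⟩, ?_⟩
        have : m - 1 + 1 = m := by omega
        rw [this]
        exact hma
      · rintro ⟨m, ⟨hm1, hmk⟩, hma⟩
        have haG : a ∈ G := (hmem a).mpr ⟨m + 1, ⟨by omega, by omega⟩, hma⟩
        have h2 : y 2 ≤ y (m + 1) := y_mono hgap (by omega : (1:ℕ) ≤ 2) (m + 1) (by omega) (by omega)
        have h3 : y 1 + 2 ≤ y 2 := hgap 1 (le_refl 1) (by omega)
        rcases hma with rfl | rfl
        · exact ⟨haG, by omega⟩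
        · exact ⟨haG, by omega⟩

lemma FF_compose {k n j : ℕ} {H : Finset ℕ} (hk : 1 ≤ k) (hj : 1 ≤ j) (hn : j + 1 ≤ n)
    (hH : H ∈ FF (k - 1) n) (hge : ∀ a ∈ H, j + 2 ≤ a) :
    ({j, j + 1} : Finset ℕ) ∪ H ∈ FF k n := by
  obtain ⟨y', hy1', hyn', hgap', hHeq⟩ := hH
  rcases Nat.eq_or_lt_of_le hk with hk1 | hk2
  · -- k = 1
    have hk1 : k = 1 := hk1.symm
    subst hk1
    have hH0 : H = ∅ := by simpa using hHeq
    subst hH0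
    refine ⟨fun _ => j, hj, ?_, by omega, ?_⟩
    · intro m hm1 hmk
      exact hn
    · simp [Finset.Icc_self]
  · -- k ≥ 2
    have hy'1H : y' 1 ∈ H := by
      rw [hHeq]
      simp only [Finset.mem_biUnion, Finset.mem_Icc, Finset.mem_insert, Finset.mem_singleton]
      exact ⟨1, ⟨le_refl 1, by omega⟩, Or.inl rfl⟩
    have hy'1j : j + 2 ≤ y' 1 := hge _ hy'1H
    refine ⟨fun m => if m = 1 then j else y' (m - 1), by simp [hj], ?_, ?_, ?_⟩
    · intro m hm1 hmk
      by_cases h1 : m = 1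
      · simp [h1]; omega
      · simp only [if_neg h1]
        exact hyn' (m - 1) (by omega) (by omega)
    · intro m hm1 hmk
      by_cases h1 : m = 1
      · subst h1
        simp only [if_pos rfl, if_neg (by omega : (1:ℕ) + 1 ≠ 1)]
        simpa using hy'1j
      · simp only [if_neg h1, if_neg (by omega : m + 1 ≠ 1)]
        have := hgap' (m - 1) (by omega) (by omega)
        have heq : m - 1 + 1 = m := by omega
        rw [heq] at this
        have heq2 : m + 1 - 1 = m := by omega
        rw [heq2]
        exact this
    · ext a
      simp only [Finset.mem_union, Finset.mem_insert, Finset.mem_singleton,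
        Finset.mem_biUnion, Finset.mem_Icc, hHeq]
      constructor
      · rintro ((rfl | rfl) | ⟨m, ⟨hm1, hmk⟩, hma⟩)
        · exact ⟨1, ⟨le_refl 1, hk⟩, by simp⟩
        · exact ⟨1, ⟨le_refl 1, hk⟩, by simp⟩
        · refine ⟨m + 1, ⟨by omega, by omega⟩, ?_⟩
          simp only [if_neg (by omega : m + 1 ≠ 1)]
          simpa using hma
      · rintro ⟨m, ⟨hm1, hmk⟩, hma⟩
        by_cases h1 : m = 1
        · subst h1
          norm_num at hma
          exact Or.inl (by omega)
        · simp only [if_neg h1] at hma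
          exact Or.inr ⟨m - 1, ⟨by omega, by omega⟩, hma⟩

lemma sort_pair_union {j : ℕ} {H : Finset ℕ} (hge : ∀ a ∈ H, j + 2 ≤ a) :
    (({j, j + 1} : Finset ℕ) ∪ H).sort (· ≤ ·) = j :: (j + 1) :: H.sort (· ≤ ·) := by
  have h1 : ({j, j + 1} : Finset ℕ) ∪ H = insert j (insert (j + 1) H) := by
    ext a; simp
  rw [h1]
  rw [Finset.sort_insert]
  · congr 1
    rw [Finset.sort_insert]
    · intro b hb; have := hge b hb; omega
    · intro hb; have := hge _ hb; omega
  · intro b hb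
    simp only [Finset.mem_insert] at hb
    rcases hb with rfl | hb
    · omega
    · have := hge b hb; omega
  · simp only [Finset.mem_insert, not_or]
    constructor
    · omega
    · intro hb; have := hge _ hb; omega

lemma pair_not_mem {j : ℕ} {H : Finset ℕ} (hge : ∀ a ∈ H, j + 2 ≤ a) :
    j ∉ H ∧ j + 1 ∉ H := by
  constructor <;> intro hb <;> have := hge _ hb <;> omega

lemma lep_pair_union {j : ℕ} {H H' : Finset ℕ} (h : lep H H')
    (hge : ∀ a ∈ H, j + 2 ≤ a) (hge' : ∀ a ∈ H', j + 2 ≤ a) :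
    lep (({j, j + 1} : Finset ℕ) ∪ H) (({j, j + 1} : Finset ℕ) ∪ H') := by
  constructor
  · rw [← Finset.length_sort (α := ℕ) (· ≤ ·), sort_pair_union hge,
      ← Finset.length_sort (α := ℕ) (· ≤ ·) (s := ({j, j + 1} : Finset ℕ) ∪ H'),
      sort_pair_union hge']
    simp only [List.length_cons]
    rw [Finset.length_sort, Finset.length_sort, h.1]
  · intro ℓ
    rw [sort_pair_union hge, sort_pair_union hge']
    match ℓ with
    | 0 => simp
    | 1 => simp
    | (ℓ + 2) =>
      simp only [List.getD_cons_succ]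
      exact h.2 ℓ

lemma Icc_pair (j : ℕ) : Finset.Icc j (j + 2 * 1 - 1) = ({j, j + 1} : Finset ℕ) := by
  ext a
  simp only [Finset.mem_Icc, Finset.mem_insert, Finset.mem_singleton]
  omega

lemma exists_max_SJ (k n j : ℕ) (S : Set (Finset ℕ)) {H : Finset ℕ}
    (hH : H ∈ SJcand k n S j 1) : ∃ M ∈ SJ k n S j 1, lep H M := by
  set T := {H' | H' ∈ SJcand k n S j 1 ∧ lep H H'} with hT
  have hTfin : T.Finite := by
    apply Set.Finite.subset (Finset.Icc 1 n).powerset.finite_toSet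
    intro H' hH'
    simp only [Finset.coe_powerset, Set.mem_preimage, Set.mem_powerset_iff, Finset.coe_subset,
      Finset.subset_iff]
    intro a ha
    have h1 := hH'.1.1 a ha
    simp only [Finset.mem_Icc]
    omega
  have hTne : T.Nonempty := ⟨H, hH, lep_refl H⟩
  obtain ⟨M, hM, hmax⟩ :=
    Set.Finite.exists_maximalFor (fun F : Finset ℕ => (F.sort (· ≤ ·)).sum) T hTfin hTne
  refine ⟨M, ⟨hM.1, ?_⟩, hM.2⟩
  intro H' hH' hle
  have hH'T : H' ∈ T := ⟨hH', lep_trans hM.2 hle⟩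
  have hlen : (M.sort (· ≤ ·)).length = (H'.sort (· ≤ ·)).length := by
    rw [Finset.length_sort, Finset.length_sort, hle.1]
  have hsum := list_sum_le _ _ hlen hle.2
  have heq := le_antisymm hsum (hmax hH'T hsum)
  exact lep_antisymm' hle (le_of_eq heq.symm)

lemma main2 (k n i : ℕ) (hk : 1 ≤ k) (hi : 1 ≤ i) (S : Set (Finset ℕ))
    (j : ℕ) (hj : i ≤ j) (G : Finset ℕ) :
    (G ∈ Bfacets k n S i ∧ j ∈ G ∧ ∀ a ∈ G, j ≤ a) ↔
      ∃ H ∈ Bfacets (k - 1) n (SJ k n S j 1) (j + 2), G = {j, j + 1} ∪ H := by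
  constructor
  · rintro ⟨⟨⟨hGFF, F, hFS, hlep⟩, hmini⟩, hjG, hminj⟩
    obtain ⟨hj1G, hj1n, hrest, hHFF, hunion⟩ := FF_decomp hk hGFF hjG hminj
    have hHcand : G \ {j, j + 1} ∈ SJcand k n S j 1 := by
      constructor
      · intro a ha
        have := hrest a ha
        omega
      · rw [Icc_pair, ← hunion]
        exact ⟨hGFF, F, hFS, hlep⟩
    obtain ⟨M, hMSJ, hlepHM⟩ := exists_max_SJ k n j S hHcand
    refine ⟨G \ {j, j + 1}, ⟨⟨hHFF, M, hMSJ, hlepHM⟩, ?_⟩, hunion⟩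
    intro a ha
    exact (hrest a ha).1
  · rintro ⟨H, ⟨⟨hHFF, M, hMSJ, hlepHM⟩, hge⟩, rfl⟩
    have hMcand := hMSJ.1
    have hMge : ∀ a ∈ M, j + 2 ≤ a := by
      intro a ha
      have := hMcand.1 a ha
      omega
    have hMideal : ({j, j + 1} : Finset ℕ) ∪ M ∈ idealOf k n S := by
      rw [← Icc_pair]
      exact hMcand.2
    obtain ⟨hMFF, F, hFS, hlepMF⟩ := hMideal
    have hj1M : j + 1 ∈ ({j, j + 1} : Finset ℕ) ∪ M := by simp
    have hj1n : j + 1 ≤ n := (FF_bounds hMFF (j + 1) hj1M).2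
    have hGFF : ({j, j + 1} : Finset ℕ) ∪ H ∈ FF k n :=
      FF_compose hk (by omega) hj1n hHFF hge
    have hlepG : lep (({j, j + 1} : Finset ℕ) ∪ H) (({j, j + 1} : Finset ℕ) ∪ M) :=
      lep_pair_union hlepHM hge hMge
    refine ⟨⟨⟨hGFF, F, hFS, lep_trans hlepG hlepMF⟩, ?_⟩, ?_, ?_⟩
    · intro a ha
      simp only [Finset.mem_union, Finset.mem_insert, Finset.mem_singleton] at ha
      rcases ha with (rfl | rfl) | ha
      · omega
      · omega
      · have := hge a ha; omega
    · simp
    · intro a ha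
      simp only [Finset.mem_union, Finset.mem_insert, Finset.mem_singleton] at ha
      rcases ha with (rfl | rfl) | ha
      · omega
      · omega
      · have := hge a ha; omega

end Aux

/-- The decomposition `B(S, i) = ⋃_{j ≥ i} B(S([j,j+1]), j+2) * [j, j+1]`:
the faces of `B(S,i)` are exactly the subsets of sets `{j, j+1} ∪ H` with
`H` a facet of `B(S([j,j+1]), j+2)` and `j ≥ i`; moreover the facets of `B(S,i)`
with minimum element `j` are exactly the sets `{j, j+1} ∪ H` with `H` a facet of
`B(S([j,j+1]), j+2)`. -/
theorem B_decomposition (k n i : ℕ) (hk : 1 ≤ k) (hi : 1 ≤ i)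
    (S : Set (Finset ℕ)) (hS : IsAC k n S) :
    (∀ τ : Finset ℕ,
      (∃ G ∈ Bfacets k n S i, τ ⊆ G) ↔
        ∃ j, i ≤ j ∧ ∃ H ∈ Bfacets (k - 1) n (SJ k n S j 1) (j + 2),
          τ ⊆ {j, j + 1} ∪ H)
    ∧ ∀ j, i ≤ j → ∀ G : Finset ℕ,
        (G ∈ Bfacets k n S i ∧ j ∈ G ∧ ∀ a ∈ G, j ≤ a) ↔
          ∃ H ∈ Bfacets (k - 1) n (SJ k n S j 1) (j + 2), G = {j, j + 1} ∪ H := by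
  constructor
  · intro τ
    constructor
    · rintro ⟨G, hG, hτ⟩
      have hGFF := hG.1.1
      have hne : G.Nonempty := FF_nonempty hk hGFF
      have hjG : G.min' hne ∈ G := G.min'_mem hne
      have hij : i ≤ G.min' hne := hG.2 _ hjG
      have hminj : ∀ a ∈ G, G.min' hne ≤ a := fun a ha => G.min'_le a ha
      obtain ⟨H, hH, hGeq⟩ := (main2 k n i hk hi S (G.min' hne) hij G).mp ⟨hG, hjG, hminj⟩
      exact ⟨G.min' hne, hij, H, hH, hGeq ▸ hτ⟩
    · rintro ⟨j, hij, H, hH, hτ⟩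
      have hmem := (main2 k n i hk hi S j hij ({j, j + 1} ∪ H)).mpr ⟨H, hH, rfl⟩
      exact ⟨_, hmem.1, hτ⟩
  · intro j hij G
    exact main2 k n i hk hi S j hij G
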